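/- Let X be a Banach space, A ⊂ X a bounded set, x* ∈ X*, and ε, δ > 0. Then every point of the slice Slice(conv A, x*, εδ) = {x ∈ conv A : Re x*(x) > sup_{conv A} Re x* − εδ} lies within distance (2δ − δ²)/(1 − δ) · ‖A‖ of the convex hull of the slice Slice(A, x*, ε) of A (assuming δ < 1). -/

import Mathlib

open Metric

set_option maxHeartbeats 1000000 in
/-- every point of the slice
`Slice(conv A, x*, εδ) = {x ∈ conv A : Re x*(x) > sup_{conv A} Re x* − εδ}`
lies within distance `(2δ − δ²)/(1 − δ) · ‖A‖` of the convex hull of the slice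
`Slice(A, x*, ε)` (where `δ < 1`). -/
theorem stmt16 {𝕜 X : Type*} [RCLike 𝕜] [NormedAddCommGroup X] [NormedSpace 𝕜 X]
    [NormedSpace ℝ X] [IsScalarTower ℝ 𝕜 X]
    (A : Set X) (hA : Bornology.IsBounded A)
    (φ : X →L[𝕜] 𝕜) (ε δ : ℝ) (hε : 0 < ε) (hδ : 0 < δ) (hδ1 : δ < 1)
    (x : X) (hx : x ∈ convexHull ℝ A)
    (hxslice :
      sSup ((fun a => RCLike.re (φ a)) '' convexHull ℝ A) - ε * δ < RCLike.re (φ x)) :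
    Metric.infDist x
        (convexHull ℝ {a ∈ A | sSup ((fun b => RCLike.re (φ b)) '' A) - ε < RCLike.re (φ a)})
      ≤ (2 * δ - δ ^ 2) / (1 - δ) * sSup ((fun a => ‖a‖) '' A) := by
  classical
  set ψ : X →L[ℝ] ℝ := (RCLike.reCLM : 𝕜 →L[ℝ] ℝ).comp (φ.restrictScalars ℝ) with hψdef
  have hψ : ∀ v, RCLike.re (φ v) = ψ v := fun _ => rfl
  simp only [hψ] at hxslice ⊢
  set M := sSup ((fun b : X => ψ b) '' A) with hM
  set N := sSup ((fun a : X => ‖a‖) '' A) with hN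
  have hAne : A.Nonempty := by
    rw [← convexHull_nonempty_iff (𝕜 := ℝ)]; exact ⟨x, hx⟩
  obtain ⟨C, hC⟩ := (isBounded_iff_forall_norm_le).mp hA
  have hNbdd : BddAbove ((fun a : X => ‖a‖) '' A) :=
    ⟨C, by rintro _ ⟨a, ha, rfl⟩; exact hC a ha⟩
  have hnormle : ∀ a ∈ A, ‖a‖ ≤ N := fun a ha => le_csSup hNbdd ⟨a, ha, rfl⟩
  have hN0 : 0 ≤ N := by
    obtain ⟨a, ha⟩ := hAne
    exact (norm_nonneg a).trans (hnormle a ha)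
  have hMbdd : BddAbove ((fun b : X => ψ b) '' A) := by
    refine ⟨‖ψ‖ * C, ?_⟩
    rintro _ ⟨a, ha, rfl⟩
    calc ψ a ≤ ‖ψ a‖ := le_abs_self _
      _ ≤ ‖ψ‖ * ‖a‖ := ψ.le_opNorm a
      _ ≤ ‖ψ‖ * C := by
          exact mul_le_mul_of_nonneg_left (hC a ha) (norm_nonneg ψ)
  have hle : ∀ a ∈ A, ψ a ≤ M := fun a ha => le_csSup hMbdd ⟨a, ha, rfl⟩
  have hconvle : ∀ y ∈ convexHull ℝ A, ψ y ≤ M := by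
    intro y hy
    have hsub : convexHull ℝ A ⊆ {v | ψ v ≤ M} :=
      convexHull_min hle (convex_halfSpace_le (ψ : X →ₗ[ℝ] ℝ).isLinear M)
    exact hsub hy
  have hsupconv : M ≤ sSup ((fun a : X => ψ a) '' (convexHull ℝ A)) := by
    refine csSup_le_csSup ?_ (hAne.image _) (Set.image_mono (subset_convexHull ℝ A))
    exact ⟨M, by rintro _ ⟨y, hy, rfl⟩; exact hconvle y hy⟩
  have hx' : M - ε * δ < ψ x := lt_of_le_of_lt (by linarith) hxslice
  rw [convexHull_eq] at hx
  obtain ⟨ι, t, w, z, hw0, hw1, hz, hxeq⟩ := hx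
  rw [Finset.centerMass_eq_of_sum_1 _ _ hw1] at hxeq
  set p : ι → Prop := fun i => M - ε < ψ (z i) with hp
  set tg := t.filter (fun i => p i) with htg
  set tb := t.filter (fun i => ¬ p i) with htb
  set μ := ∑ i ∈ tb, w i with hμ
  set ν := ∑ i ∈ tg, w i with hν
  have hνμ : ν + μ = 1 := by
    rw [hν, hμ, Finset.sum_filter_add_sum_filter_not t p w]; exact hw1
  have hμ0 : 0 ≤ μ :=
    Finset.sum_nonneg fun i hi => hw0 i (Finset.mem_of_mem_filter i hi)
  have hν0 : 0 ≤ ν :=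
    Finset.sum_nonneg fun i hi => hw0 i (Finset.mem_of_mem_filter i hi)
  set g := ∑ i ∈ tg, w i • z i with hg
  set b := ∑ i ∈ tb, w i • z i with hb
  have hxgb : x = g + b := by
    rw [hg, hb, ← hxeq, ← Finset.sum_filter_add_sum_filter_not t p (fun i => w i • z i)]
  have hψx : ψ x ≤ M - μ * ε := by
    have hexp : ψ x = ∑ i ∈ tg, w i * ψ (z i) + ∑ i ∈ tb, w i * ψ (z i) := by
      rw [← hxeq, map_sum, ← Finset.sum_filter_add_sum_filter_not t p (fun i => ψ (w i • z i))]
      simp [smul_eq_mul]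
      rfl
    have h1 : ∑ i ∈ tg, w i * ψ (z i) ≤ ν * M := by
      rw [hν, Finset.sum_mul]
      refine Finset.sum_le_sum fun i hi => ?_
      have him := Finset.mem_of_mem_filter i hi
      exact mul_le_mul_of_nonneg_left (hle _ (hz i him)) (hw0 i him)
    have h2 : ∑ i ∈ tb, w i * ψ (z i) ≤ μ * (M - ε) := by
      rw [hμ, Finset.sum_mul]
      refine Finset.sum_le_sum fun i hi => ?_
      have him := Finset.mem_of_mem_filter i hi
      have hnp : ¬ p i := (Finset.mem_filter.mp hi).2
      have : ψ (z i) ≤ M - ε := not_lt.mp hnp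
      exact mul_le_mul_of_nonneg_left this (hw0 i him)
    calc ψ x = ∑ i ∈ tg, w i * ψ (z i) + ∑ i ∈ tb, w i * ψ (z i) := hexp
      _ ≤ ν * M + μ * (M - ε) := add_le_add h1 h2
      _ = M - μ * ε := by
          have hv : ν = 1 - μ := by linarith
          rw [hv]; ring
  have hεμ : μ * ε < ε * δ := by linarith
  have hμδ : μ < δ := by nlinarith [hεμ, hε]
  have hνpos : 0 < ν := by linarith
  have hν1 : ν ≤ 1 := by linarith
  set y := ν⁻¹ • g with hy
  have hymem : y ∈ convexHull ℝ {a ∈ A | M - ε < ψ a} := by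
    have hmem : ∀ i ∈ tg, z i ∈ {a ∈ A | M - ε < ψ a} := fun i hi =>
      ⟨hz i (Finset.mem_of_mem_filter i hi), (Finset.mem_filter.mp hi).2⟩
    have h := Finset.centerMass_mem_convexHull tg
      (fun i hi => hw0 i (Finset.mem_of_mem_filter i hi)) (by rwa [← hν]) hmem
    rwa [Finset.centerMass, ← hν, ← hg, ← hy] at h
  have hgN : ‖g‖ ≤ ν * N := by
    calc ‖g‖ ≤ ∑ i ∈ tg, ‖w i • z i‖ := norm_sum_le _ _
      _ ≤ ∑ i ∈ tg, w i * N := by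
          refine Finset.sum_le_sum fun i hi => ?_
          have him := Finset.mem_of_mem_filter i hi
          rw [norm_smul, Real.norm_eq_abs, abs_of_nonneg (hw0 i him)]
          exact mul_le_mul_of_nonneg_left (hnormle _ (hz i him)) (hw0 i him)
      _ = ν * N := by rw [hν, Finset.sum_mul]
  have hbN : ‖b‖ ≤ μ * N := by
    calc ‖b‖ ≤ ∑ i ∈ tb, ‖w i • z i‖ := norm_sum_le _ _
      _ ≤ ∑ i ∈ tb, w i * N := by
          refine Finset.sum_le_sum fun i hi => ?_
          have him := Finset.mem_of_mem_filter i hi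
          rw [norm_smul, Real.norm_eq_abs, abs_of_nonneg (hw0 i him)]
          exact mul_le_mul_of_nonneg_left (hnormle _ (hz i him)) (hw0 i him)
      _ = μ * N := by rw [hμ, Finset.sum_mul]
  have hdist : ‖x - y‖ ≤ 2 * μ * N := by
    have hxy : x - y = (1 - ν⁻¹) • g + b := by
      rw [hxgb, hy, sub_smul, one_smul]
      abel
    have hinv1 : 1 ≤ ν⁻¹ := (one_le_inv_iff₀).mpr ⟨hνpos, hν1⟩
    calc ‖x - y‖ = ‖(1 - ν⁻¹) • g + b‖ := by rw [hxy]
      _ ≤ ‖(1 - ν⁻¹) • g‖ + ‖b‖ := norm_add_le _ _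
      _ = (ν⁻¹ - 1) * ‖g‖ + ‖b‖ := by
          rw [norm_smul, Real.norm_eq_abs, abs_of_nonpos (by linarith), neg_sub]
      _ ≤ (ν⁻¹ - 1) * (ν * N) + μ * N := by
          refine add_le_add (mul_le_mul_of_nonneg_left hgN (by linarith)) hbN
      _ = (1 - ν) * N + μ * N := by
          field_simp
      _ = 2 * μ * N := by
          have hv : ν = 1 - μ := by linarith
          rw [hv]; ring
  calc Metric.infDist x (convexHull ℝ {a ∈ A | M - ε < ψ a})
      ≤ dist x y := Metric.infDist_le_dist_of_mem hymem
    _ = ‖x - y‖ := by rw [dist_eq_norm]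
    _ ≤ 2 * μ * N := hdist
    _ ≤ 2 * δ * N := by
        have := mul_le_mul_of_nonneg_right (le_of_lt hμδ) hN0
        nlinarith [this]
    _ ≤ (2 * δ - δ ^ 2) / (1 - δ) * N := by
        have h2 : 2 * δ ≤ (2 * δ - δ ^ 2) / (1 - δ) := by
          rw [le_div_iff₀ (by linarith)]
          nlinarith
        exact mul_le_mul_of_nonneg_right h2 hN0
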